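/- Let K be an algebraically closed field of characteristic zero, let β ∈ K with β ≠ 0, and let J = {i₁,i₂,i₃,i₄,i₅} be a set of five pairwise distinct natural numbers. Suppose D_{J∖{i₅}}(β) = 0 and that it is NOT the case that exactly three of the four values β^{i₁}, β^{i₂}, β^{i₃}, β^{i₄} are equal to a common value with the remaining one different. Then either D_{J∖{i_j}}(β) = 0 for all j ∈ {1,2,3,4,5}, or D_{J∖{i_j}}(β) ≠ 0 for all j ∈ {1,2,3,4}. -/

import Mathlib

open Polynomial

/-- The 4×4 matrix `𝐌_J(x)` for `J = {a,b,c,d}` (columns in the given order),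
whose column for exponent `i` is `(1, i, x^i, i·x^i)ᵀ`, and its determinant `D_J`. -/
noncomputable def Dfour (a b c d : ℕ) : Polynomial ℤ :=
  (Matrix.of fun r (j : Fin 4) =>
    ![(1 : Polynomial ℤ), ((![a,b,c,d] j : ℕ) : Polynomial ℤ),
      X ^ (![a,b,c,d] j), ((![a,b,c,d] j : ℕ) : Polynomial ℤ) * X ^ (![a,b,c,d] j)] r).det

/-- `D_S` for a finite set `S` of naturals: if `S` has exactly four elements,
listed in increasing order, this is the determinant above; otherwise `0`. -/
noncomputable def DJ (S : Finset ℕ) : Polynomial ℤ :=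
  match S.sort (· ≤ ·) with
  | [a, b, c, d] => Dfour a b c d
  | _ => 0

namespace DJAux

variable {K : Type*} [Field K]

def vv (β : K) (i : ℕ) : Fin 4 → K := ![1, (i : K), β ^ i, (i : K) * β ^ i]

lemma det_ne_zero_iff_li (M : Fin 4 → Fin 4 → K) :
    (Matrix.of M).det ≠ 0 ↔ LinearIndependent K M := by
  rw [← isUnit_iff_ne_zero, ← Matrix.isUnit_iff_isUnit_det]
  exact (Matrix.linearIndependent_rows_iff_isUnit).symm

lemma aeval_Dfour (β : K) (a b c d : ℕ) :
    aeval β (Dfour a b c d) =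
      (Matrix.of ![vv β a, vv β b, vv β c, vv β d]).det := by
  rw [← Matrix.det_transpose (Matrix.of ![vv β a, vv β b, vv β c, vv β d])]
  rw [Dfour, AlgHom.map_det]
  congr 1
  ext r j
  fin_cases r <;> fin_cases j <;>
    simp [vv, Matrix.map_apply, Matrix.transpose_apply, Matrix.vecHead, Matrix.vecTail]

lemma li_iff_subtype (β : K) (S : Finset ℕ) (hS : S.card = 4) {a b c d : ℕ}
    (hab : a ≠ b) (hac : a ≠ c) (had : a ≠ d) (hbc : b ≠ c) (hbd : b ≠ d) (hcd : c ≠ d)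
    (ha : a ∈ S) (hb : b ∈ S) (hc : c ∈ S) (hd : d ∈ S) :
    LinearIndependent K ![vv β a, vv β b, vv β c, vv β d] ↔
      LinearIndependent K (fun x : {y // y ∈ S} => vv β x) := by
  have hmem : ∀ k : Fin 4, ![a,b,c,d] k ∈ S := by
    intro k; fin_cases k <;> assumption
  set e : Fin 4 → {y // y ∈ S} := fun k => ⟨![a,b,c,d] k, hmem k⟩ with he
  have hinj : Function.Injective e := by
    intro x y h
    have h' : ![a,b,c,d] x = ![a,b,c,d] y := congrArg Subtype.val h
    fin_cases x <;> fin_cases y <;> simp_all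
  have hbij : Function.Bijective e := by
    rw [Fintype.bijective_iff_injective_and_card]
    exact ⟨hinj, by simp [Fintype.card_coe, hS]⟩
  exact (linearIndependent_equiv' (R := K) (M := Fin 4 → K) (Equiv.ofBijective e hbij)
    (f := fun x : {y // y ∈ S} => vv β x) (g := ![vv β a, vv β b, vv β c, vv β d])
    (by funext k; fin_cases k <;> rfl))

lemma aeval_DJ_iff (β : K) (S : Finset ℕ) (hS : S.card = 4) {a b c d : ℕ}
    (hab : a ≠ b) (hac : a ≠ c) (had : a ≠ d) (hbc : b ≠ c) (hbd : b ≠ d) (hcd : c ≠ d)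
    (ha : a ∈ S) (hb : b ∈ S) (hc : c ∈ S) (hd : d ∈ S) :
    (aeval β (DJ S) = 0) ↔ (Matrix.of ![vv β a, vv β b, vv β c, vv β d]).det = 0 := by
  have hlen : (S.sort (· ≤ ·)).length = 4 := by rw [Finset.length_sort, hS]
  rcases hL : S.sort (· ≤ ·) with _ | ⟨p, _ | ⟨q, _ | ⟨r, _ | ⟨s, _ | ⟨t, L'⟩⟩⟩⟩⟩ <;>
    rw [hL] at hlen <;> simp at hlen
  have hnd : ([p,q,r,s] : List ℕ).Nodup := hL ▸ Finset.sort_nodup S (· ≤ ·)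
  have hmem : ∀ x ∈ ([p,q,r,s] : List ℕ), x ∈ S := by
    intro x hx; rw [← Finset.mem_sort (r := (· ≤ ·)), hL]; exact hx
  have hpq : p ≠ q := by simp at hnd; tauto
  have hpr : p ≠ r := by simp at hnd; tauto
  have hps : p ≠ s := by simp at hnd; tauto
  have hqr : q ≠ r := by simp at hnd; tauto
  have hqs : q ≠ s := by simp at hnd; tauto
  have hrs : r ≠ s := by simp at hnd; tauto
  have hDJ : DJ S = Dfour p q r s := by
    unfold DJ; rw [hL]
  rw [hDJ, aeval_Dfour]
  have h1 := det_ne_zero_iff_li (K := K) ![vv β p, vv β q, vv β r, vv β s]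
  have h2 := det_ne_zero_iff_li (K := K) ![vv β a, vv β b, vv β c, vv β d]
  have h3 := li_iff_subtype β S hS hpq hpr hps hqr hqs hrs
    (hmem p (by simp)) (hmem q (by simp)) (hmem r (by simp)) (hmem s (by simp))
  have h4 := li_iff_subtype β S hS hab hac had hbc hbd hcd ha hb hc hd
  exact not_iff_not.mp (h1.trans ((h3.trans h4.symm).trans h2.symm))

lemma det_fin_four (M : Matrix (Fin 4) (Fin 4) K) : M.det =
    M 0 0*M 1 1*M 2 2*M 3 3 - M 0 0*M 1 1*M 2 3*M 3 2 - M 0 0*M 1 2*M 2 1*M 3 3 + M 0 0*M 1 2*M 2 3*M 3 1 + M 0 0*M 1 3*M 2 1*M 3 2 - M 0 0*M 1 3*M 2 2*M 3 1 - M 0 1*M 1 0*M 2 2*M 3 3 + M 0 1*M 1 0*M 2 3*M 3 2 + M 0 1*M 1 2*M 2 0*M 3 3 - M 0 1*M 1 2*M 2 3*M 3 0 - M 0 1*M 1 3*M 2 0*M 3 2 + M 0 1*M 1 3*M 2 2*M 3 0 + M 0 2*M 1 0*M 2 1*M 3 3 - M 0 2*M 1 0*M 2 3*M 3 1 - M 0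 2*M 1 1*M 2 0*M 3 3 + M 0 2*M 1 1*M 2 3*M 3 0 + M 0 2*M 1 3*M 2 0*M 3 1 - M 0 2*M 1 3*M 2 1*M 3 0 - M 0 3*M 1 0*M 2 1*M 3 2 + M 0 3*M 1 0*M 2 2*M 3 1 + M 0 3*M 1 1*M 2 0*M 3 2 - M 0 3*M 1 1*M 2 2*M 3 0 - M 0 3*M 1 2*M 2 0*M 3 1 + M 0 3*M 1 2*M 2 1*M 3 0 := by
  simp (config := { decide := true }) only [Matrix.det_succ_row_zero, Fin.sum_univ_succ,
    Matrix.det_fin_three, Matrix.submatrix_apply, Fin.succAbove, Fin.lt_def,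
    Finset.univ_unique, Finset.sum_singleton, Matrix.det_fin_one,
    show (⟨2, by omega⟩ : Fin 4) = 2 from rfl, show (⟨3, by omega⟩ : Fin 4) = 3 from rfl]
  norm_num [Fin.succ, Fin.castSucc, Fin.castAdd, Fin.castLE,
    show (⟨2, by omega⟩ : Fin 4) = 2 from rfl, show (⟨3, by omega⟩ : Fin 4) = 3 from rfl,
    show ((3 : Fin 4) : ℕ) = 3 from rfl, show ((2 : Fin 4) : ℕ) = 2 from rfl]
  ring

lemma det3eq (A B C t : K) (x : Fin 4 → K) :
    (Matrix.of ![![1,A,t,A*t], ![1,B,t,B*t], ![1,C,t,C*t], x]).det = 0 := by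
  rw [det_fin_four]
  simp [Matrix.vecHead, Matrix.vecTail]
  ring

lemma det_span3 (p q r : Fin 4 → K) (a₀ b₀ c₀ a₁ b₁ c₁ a₂ b₂ c₂ a₃ b₃ c₃ : K) :
    (Matrix.of ![a₀•p+b₀•q+c₀•r, a₁•p+b₁•q+c₁•r, a₂•p+b₂•q+c₂•r, a₃•p+b₃•q+c₃•r]).det
      = 0 := by
  rw [det_fin_four]
  simp [Matrix.vecHead, Matrix.vecTail]
  ring

lemma li_triple_iff [CharZero K] (β : K) {a b c : ℕ} (hab : a ≠ b) (hac : a ≠ c)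
    (hbc : b ≠ c) :
    ¬ LinearIndependent K ![vv β a, vv β b, vv β c] ↔ (β ^ a = β ^ b ∧ β ^ a = β ^ c) := by
  have hAB : (a : K) ≠ (b : K) := by exact_mod_cast fun h => hab (Nat.cast_injective h)
  have hAC : (a : K) ≠ (c : K) := by exact_mod_cast fun h => hac (Nat.cast_injective h)
  have hBC : (b : K) ≠ (c : K) := by exact_mod_cast fun h => hbc (Nat.cast_injective h)
  constructor
  · intro h
    obtain ⟨g, hsum, i, hi⟩ := Fintype.not_linearIndependent_iff.1 h
    have e0 : g 0 + g 1 + g 2 = 0 := by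
      have := congrFun hsum 0; simpa [Fin.sum_univ_three, vv] using this
    have e1 : g 0 * a + g 1 * b + g 2 * c = 0 := by
      have := congrFun hsum 1; simpa [Fin.sum_univ_three, vv] using this
    have e3 : g 0 * β ^ a + g 1 * β ^ b + g 2 * β ^ c = 0 := by
      have := congrFun hsum 2; simpa [Fin.sum_univ_three, vv] using this
    have e4 : g 0 * (a * β ^ a) + g 1 * (b * β ^ b) + g 2 * (c * β ^ c) = 0 := by
      have := congrFun hsum 3; simpa [Fin.sum_univ_three, vv, mul_assoc] using this
    have hg2 : g 2 ≠ 0 := by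
      intro h2
      have h0 : g 0 * ((a : K) - b) = 0 := by linear_combination e1 - b * e0 - c * h2 + b*h2
      have hg0 : g 0 = 0 := by
        rcases mul_eq_zero.1 h0 with h | h
        · exact h
        · exact absurd (sub_eq_zero.1 h) hAB
      have hg1 : g 1 = 0 := by linear_combination e0 - hg0 - h2
      fin_cases i <;> simp_all
    have k1 : g 2 * (((c:K) - a) * (β ^ c - β ^ b)) = 0 := by
      linear_combination e4 - (a:K) * e3 - β ^ b * e1 + (a:K) * β ^ b * e0
    have k2 : g 2 * (((c:K) - b) * (β ^ c - β ^ a)) = 0 := by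
      linear_combination e4 - (b:K) * e3 - β ^ a * e1 + (b:K) * β ^ a * e0
    have hbc' : β ^ c = β ^ b := by
      rcases mul_eq_zero.1 k1 with h | h
      · exact absurd h hg2
      · rcases mul_eq_zero.1 h with h' | h'
        · exact absurd (sub_eq_zero.1 h').symm hAC
        · exact sub_eq_zero.1 h'
    have hac' : β ^ c = β ^ a := by
      rcases mul_eq_zero.1 k2 with h | h
      · exact absurd h hg2
      · rcases mul_eq_zero.1 h with h' | h'
        · exact absurd (sub_eq_zero.1 h').symm hBC
        · exact sub_eq_zero.1 h'
    exact ⟨hac'.symm.trans hbc', hac'.symm⟩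
  · rintro ⟨h1, h2⟩
    apply Fintype.not_linearIndependent_iff.2
    refine ⟨![(b:K) - c, (c:K) - a, (a:K) - b], ?_, ⟨2, sub_ne_zero.2 hAB⟩⟩
    funext r
    fin_cases r <;>
      simp [Fin.sum_univ_three, vv, ← h1, ← h2] <;> ring

lemma card4le (a b c d : ℕ) : ({a,b,c,d} : Finset ℕ).card ≤ 4 := by
  have h1 := Finset.card_insert_le a ({b,c,d} : Finset ℕ)
  have h2 := Finset.card_insert_le b ({c,d} : Finset ℕ)
  have h3 := Finset.card_insert_le c ({d} : Finset ℕ)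
  have h4 : ({d} : Finset ℕ).card = 1 := Finset.card_singleton d
  omega

lemma card5_le_of_sub {s : Finset ℕ} (a b c d : ℕ) (h : s ⊆ {a,b,c,d}) : s.card ≤ 4 :=
  le_trans (Finset.card_le_card h) (card4le a b c d)

lemma card5_dup (x y z w v : ℕ)
    (h : x = y ∨ x = z ∨ x = w ∨ x = v ∨ y = z ∨ y = w ∨ y = v ∨ z = w ∨ z = v ∨ w = v) :
    ({x,y,z,w,v} : Finset ℕ).card ≤ 4 := by
  rcases h with h|h|h|h|h|h|h|h|h|h
  · exact card5_le_of_sub y z w v (by intro t ht; simp at ht ⊢; omega)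
  · exact card5_le_of_sub y z w v (by intro t ht; simp at ht ⊢; omega)
  · exact card5_le_of_sub y z w v (by intro t ht; simp at ht ⊢; omega)
  · exact card5_le_of_sub y z w v (by intro t ht; simp at ht ⊢; omega)
  · exact card5_le_of_sub x z w v (by intro t ht; simp at ht ⊢; omega)
  · exact card5_le_of_sub x z w v (by intro t ht; simp at ht ⊢; omega)
  · exact card5_le_of_sub x z w v (by intro t ht; simp at ht ⊢; omega)
  · exact card5_le_of_sub x y w v (by intro t ht; simp at ht ⊢; omega)
  · exact card5_le_of_sub x y w v (by intro t ht; simp at ht ⊢; omega)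
  · exact card5_le_of_sub x y z v (by intro t ht; simp at ht ⊢; omega)

end DJAux

open DJAux in
/-- let `β ≠ 0` in an algebraically closed field of characteristic zero and
`J = {i₁,…,i₅}` five pairwise distinct naturals with `D_{J∖{i₅}}(β) = 0`, such that it is
not the case that exactly three of `β^{i₁},…,β^{i₄}` agree with the fourth different. Then
either all five `D_{J∖{i_j}}(β)` vanish, or none of `D_{J∖{i_j}}(β)`, `1 ≤ j ≤ 4`, vanish. -/
theorem DJ_alternative (K : Type*) [Field K] [IsAlgClosed K] [CharZero K]
    (β : K) (hβ : β ≠ 0) (i₁ i₂ i₃ i₄ i₅ : ℕ)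
    (hcard : ({i₁, i₂, i₃, i₄, i₅} : Finset ℕ).card = 5)
    (h₅ : Polynomial.aeval β (DJ ({i₁, i₂, i₃, i₄, i₅} \ {i₅})) = 0)
    (hnot : ¬ ((β ^ i₁ = β ^ i₂ ∧ β ^ i₁ = β ^ i₃ ∧ β ^ i₁ ≠ β ^ i₄) ∨
               (β ^ i₁ = β ^ i₂ ∧ β ^ i₁ = β ^ i₄ ∧ β ^ i₁ ≠ β ^ i₃) ∨
               (β ^ i₁ = β ^ i₃ ∧ β ^ i₁ = β ^ i₄ ∧ β ^ i₁ ≠ β ^ i₂) ∨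
               (β ^ i₂ = β ^ i₃ ∧ β ^ i₂ = β ^ i₄ ∧ β ^ i₂ ≠ β ^ i₁))) :
    (∀ j ∈ ({i₁, i₂, i₃, i₄, i₅} : Finset ℕ),
        Polynomial.aeval β (DJ ({i₁, i₂, i₃, i₄, i₅} \ {j})) = 0) ∨
    (∀ j ∈ ({i₁, i₂, i₃, i₄} : Finset ℕ),
        Polynomial.aeval β (DJ ({i₁, i₂, i₃, i₄, i₅} \ {j})) ≠ 0) := by
  classical
  have h12 : i₁ ≠ i₂ := fun h => by have := card5_dup i₁ i₂ i₃ i₄ i₅ (Or.inl h); omega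
  have h13 : i₁ ≠ i₃ := fun h => by have := card5_dup i₁ i₂ i₃ i₄ i₅ (Or.inr (Or.inl h)); omega
  have h14 : i₁ ≠ i₄ := fun h => by have := card5_dup i₁ i₂ i₃ i₄ i₅ (Or.inr (Or.inr (Or.inl h))); omega
  have h15 : i₁ ≠ i₅ := fun h => by have := card5_dup i₁ i₂ i₃ i₄ i₅ (Or.inr (Or.inr (Or.inr (Or.inl h)))); omega
  have h23 : i₂ ≠ i₃ := fun h => by have := card5_dup i₁ i₂ i₃ i₄ i₅ (Or.inr (Or.inr (Or.inr (Or.inr (Or.inl h))))); omega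
  have h24 : i₂ ≠ i₄ := fun h => by have := card5_dup i₁ i₂ i₃ i₄ i₅ (Or.inr (Or.inr (Or.inr (Or.inr (Or.inr (Or.inl h)))))); omega
  have h25 : i₂ ≠ i₅ := fun h => by have := card5_dup i₁ i₂ i₃ i₄ i₅ (Or.inr (Or.inr (Or.inr (Or.inr (Or.inr (Or.inr (Or.inl h))))))); omega
  have h34 : i₃ ≠ i₄ := fun h => by have := card5_dup i₁ i₂ i₃ i₄ i₅ (Or.inr (Or.inr (Or.inr (Or.inr (Or.inr (Or.inr (Or.inr (Or.inl h)))))))); omega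
  have h35 : i₃ ≠ i₅ := fun h => by have := card5_dup i₁ i₂ i₃ i₄ i₅ (Or.inr (Or.inr (Or.inr (Or.inr (Or.inr (Or.inr (Or.inr (Or.inr (Or.inl h))))))))); omega
  have h45 : i₄ ≠ i₅ := fun h => by have := card5_dup i₁ i₂ i₃ i₄ i₅ (Or.inr (Or.inr (Or.inr (Or.inr (Or.inr (Or.inr (Or.inr (Or.inr (Or.inr h))))))))); omega
  set T : Finset ℕ := {i₁, i₂, i₃, i₄, i₅} with hT
  have m1 : i₁ ∈ T := by simp [hT]
  have m2 : i₂ ∈ T := by simp [hT]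
  have m3 : i₃ ∈ T := by simp [hT]
  have m4 : i₄ ∈ T := by simp [hT]
  have m5 : i₅ ∈ T := by simp [hT]
  have c5 : ∀ j ∈ T, (T \ {j}).card = 4 := fun j hj => by
    rw [Finset.card_sdiff_of_subset (Finset.singleton_subset_iff.2 hj), Finset.card_singleton, hcard]
  have msd : ∀ {x y : ℕ}, x ∈ T → x ≠ y → x ∈ T \ {y} := fun hx hxy =>
    Finset.mem_sdiff.2 ⟨hx, by simp [hxy]⟩
  have H1 : Polynomial.aeval β (DJ (T \ {i₁})) = 0 ↔
      (Matrix.of ![vv β i₂, vv β i₃, vv β i₄, vv β i₅]).det = 0 :=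
    aeval_DJ_iff β _ (c5 i₁ m1) h23 h24 h25 h34 h35 h45
      (msd m2 (Ne.symm h12)) (msd m3 (Ne.symm h13)) (msd m4 (Ne.symm h14)) (msd m5 (Ne.symm h15))
  have H2 : Polynomial.aeval β (DJ (T \ {i₂})) = 0 ↔
      (Matrix.of ![vv β i₁, vv β i₃, vv β i₄, vv β i₅]).det = 0 :=
    aeval_DJ_iff β _ (c5 i₂ m2) h13 h14 h15 h34 h35 h45
      (msd m1 h12) (msd m3 (Ne.symm h23)) (msd m4 (Ne.symm h24)) (msd m5 (Ne.symm h25))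
  have H3 : Polynomial.aeval β (DJ (T \ {i₃})) = 0 ↔
      (Matrix.of ![vv β i₁, vv β i₂, vv β i₄, vv β i₅]).det = 0 :=
    aeval_DJ_iff β _ (c5 i₃ m3) h12 h14 h15 h24 h25 h45
      (msd m1 h13) (msd m2 h23) (msd m4 (Ne.symm h34)) (msd m5 (Ne.symm h35))
  have H4 : Polynomial.aeval β (DJ (T \ {i₄})) = 0 ↔
      (Matrix.of ![vv β i₁, vv β i₂, vv β i₃, vv β i₅]).det = 0 :=
    aeval_DJ_iff β _ (c5 i₄ m4) h12 h13 h15 h23 h25 h35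
      (msd m1 h14) (msd m2 h24) (msd m3 h34) (msd m5 (Ne.symm h45))
  have H5 : Polynomial.aeval β (DJ (T \ {i₅})) = 0 ↔
      (Matrix.of ![vv β i₁, vv β i₂, vv β i₃, vv β i₄]).det = 0 :=
    aeval_DJ_iff β _ (c5 i₅ m5) h12 h13 h14 h23 h24 h34
      (msd m1 h15) (msd m2 h25) (msd m3 h35) (msd m4 h45)
  have r1 : vv β i₁ = ![1, (i₁:K), β ^ i₁, (i₁:K) * β ^ i₁] := rfl
  by_cases hall : β ^ i₁ = β ^ i₂ ∧ β ^ i₁ = β ^ i₃ ∧ β ^ i₁ = β ^ i₄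
  · -- all four powers equal : all five determinants vanish
    left
    obtain ⟨q2, q3, q4⟩ := hall
    have r2 : vv β i₂ = ![1, (i₂:K), β ^ i₁, (i₂:K) * β ^ i₁] := by unfold vv; rw [q2]
    have r3 : vv β i₃ = ![1, (i₃:K), β ^ i₁, (i₃:K) * β ^ i₁] := by unfold vv; rw [q3]
    have r4 : vv β i₄ = ![1, (i₄:K), β ^ i₁, (i₄:K) * β ^ i₁] := by unfold vv; rw [q4]
    intro j hj
    simp only [hT, Finset.mem_insert, Finset.mem_singleton] at hj
    rcases hj with h | h | h | h | h
    · rw [h, H1, r2, r3, r4]; exact det3eq _ _ _ _ _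
    · rw [h, H2, r1, r3, r4]; exact det3eq _ _ _ _ _
    · rw [h, H3, r1, r2, r4]; exact det3eq _ _ _ _ _
    · rw [h, H4, r1, r2, r3]; exact det3eq _ _ _ _ _
    · rw [h, H5, r1, r2, r3]; exact det3eq _ _ _ _ _
  · -- no three of the four powers are equal
    have t012 : ¬(β ^ i₁ = β ^ i₂ ∧ β ^ i₁ = β ^ i₃) := by
      rintro ⟨p, q⟩
      by_cases r : β ^ i₁ = β ^ i₄
      · exact hall ⟨p, q, r⟩
      · exact hnot (Or.inl ⟨p, q, r⟩)
    have t013 : ¬(β ^ i₁ = β ^ i₂ ∧ β ^ i₁ = β ^ i₄) := by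
      rintro ⟨p, q⟩
      by_cases r : β ^ i₁ = β ^ i₃
      · exact hall ⟨p, r, q⟩
      · exact hnot (Or.inr (Or.inl ⟨p, q, r⟩))
    have t023 : ¬(β ^ i₁ = β ^ i₃ ∧ β ^ i₁ = β ^ i₄) := by
      rintro ⟨p, q⟩
      by_cases r : β ^ i₁ = β ^ i₂
      · exact hall ⟨r, p, q⟩
      · exact hnot (Or.inr (Or.inr (Or.inl ⟨p, q, r⟩)))
    have t123 : ¬(β ^ i₂ = β ^ i₃ ∧ β ^ i₂ = β ^ i₄) := by
      rintro ⟨p, q⟩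
      by_cases r : β ^ i₂ = β ^ i₁
      · exact hall ⟨r.symm, r.symm.trans p, r.symm.trans q⟩
      · exact hnot (Or.inr (Or.inr (Or.inr ⟨p, q, r⟩)))
    have LI012 : LinearIndependent K ![vv β i₁, vv β i₂, vv β i₃] :=
      not_not.1 (mt (li_triple_iff β h12 h13 h23).1 t012)
    have LI013 : LinearIndependent K ![vv β i₁, vv β i₂, vv β i₄] :=
      not_not.1 (mt (li_triple_iff β h12 h14 h24).1 t013)
    have LI023 : LinearIndependent K ![vv β i₁, vv β i₃, vv β i₄] :=
      not_not.1 (mt (li_triple_iff β h13 h14 h34).1 t023)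
    have LI123 : LinearIndependent K ![vv β i₂, vv β i₃, vv β i₄] :=
      not_not.1 (mt (li_triple_iff β h23 h24 h34).1 t123)
    -- extract the coefficients expressing v i₄ through v i₁, v i₂, v i₃
    have hdet5 : (Matrix.of ![vv β i₁, vv β i₂, vv β i₃, vv β i₄]).det = 0 := H5.1 h₅
    have hnli : ¬ LinearIndependent K ![vv β i₁, vv β i₂, vv β i₃, vv β i₄] :=
      fun hli => (det_ne_zero_iff_li ![vv β i₁, vv β i₂, vv β i₃, vv β i₄]).2 hli hdet5
    obtain ⟨g, hsum, i, hi⟩ := Fintype.not_linearIndependent_iff.1 hnli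
    have hv : g 0 • vv β i₁ + g 1 • vv β i₂ + g 2 • vv β i₃ + g 3 • vv β i₄ = 0 := by
      simpa [Fin.sum_univ_four] using hsum
    have hg3 : g 3 ≠ 0 := by
      intro h3
      rw [h3, zero_smul, add_zero] at hv
      have hz := Fintype.linearIndependent_iff.1 LI012 ![g 0, g 1, g 2] (by
        simpa [Fin.sum_univ_three] using hv)
      have z0 : g 0 = 0 := by simpa using hz 0
      have z1 : g 1 = 0 := by simpa using hz 1
      have z2 : g 2 = 0 := by simpa using hz 2
      apply hi
      fin_cases i
      · exact z0
      · exact z1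
      · exact z2
      · exact h3
    obtain ⟨c₀, c₁, c₂, hw3⟩ :
        ∃ c₀ c₁ c₂ : K, vv β i₄ = c₀ • vv β i₁ + c₁ • vv β i₂ + c₂ • vv β i₃ := by
      refine ⟨-(g 0)/g 3, -(g 1)/g 3, -(g 2)/g 3, ?_⟩
      funext r
      have hr := congrFun hv r
      simp only [Pi.add_apply, Pi.smul_apply, Pi.zero_apply, smul_eq_mul] at hr ⊢
      rw [div_mul_eq_mul_div, div_mul_eq_mul_div, div_mul_eq_mul_div, ← add_div,
        ← add_div, eq_div_iff hg3]
      linear_combination hr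
    have hc0 : c₀ ≠ 0 := by
      intro h
      refine (Fintype.not_linearIndependent_iff.2 ⟨![c₁, c₂, -1], ?_, ⟨2, by simp⟩⟩) LI123
      funext r
      have h3r := congrFun hw3 r
      simp only [Pi.add_apply, Pi.smul_apply, Pi.zero_apply, smul_eq_mul] at h3r
      rw [h] at h3r
      simp [Fin.sum_univ_three]
      linear_combination -h3r
    have hc1 : c₁ ≠ 0 := by
      intro h
      refine (Fintype.not_linearIndependent_iff.2 ⟨![c₀, c₂, -1], ?_, ⟨2, by simp⟩⟩) LI023
      funext r
      have h3r := congrFun hw3 r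
      simp only [Pi.add_apply, Pi.smul_apply, Pi.zero_apply, smul_eq_mul] at h3r
      rw [h] at h3r
      simp [Fin.sum_univ_three]
      linear_combination -h3r
    have hc2 : c₂ ≠ 0 := by
      intro h
      refine (Fintype.not_linearIndependent_iff.2 ⟨![c₀, c₁, -1], ?_, ⟨2, by simp⟩⟩) LI013
      funext r
      have h3r := congrFun hw3 r
      simp only [Pi.add_apply, Pi.smul_apply, Pi.zero_apply, smul_eq_mul] at h3r
      rw [h] at h3r
      simp [Fin.sum_univ_three]
      linear_combination -h3r
    by_cases h5d : (Matrix.of ![vv β i₁, vv β i₂, vv β i₃, vv β i₅]).det = 0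
    · -- v i₅ also lies in the span : all five determinants vanish
      left
      have hnli' : ¬ LinearIndependent K ![vv β i₁, vv β i₂, vv β i₃, vv β i₅] :=
        fun hli => (det_ne_zero_iff_li ![vv β i₁, vv β i₂, vv β i₃, vv β i₅]).2 hli h5d
      obtain ⟨g', hsum', i', hi'⟩ := Fintype.not_linearIndependent_iff.1 hnli'
      have hv' : g' 0 • vv β i₁ + g' 1 • vv β i₂ + g' 2 • vv β i₃ + g' 3 • vv β i₅ = 0 := by
        simpa [Fin.sum_univ_four] using hsum'
      have hg'3 : g' 3 ≠ 0 := by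
        intro h3
        rw [h3, zero_smul, add_zero] at hv'
        have hz := Fintype.linearIndependent_iff.1 LI012 ![g' 0, g' 1, g' 2] (by
          simpa [Fin.sum_univ_three] using hv')
        have z0 : g' 0 = 0 := by simpa using hz 0
        have z1 : g' 1 = 0 := by simpa using hz 1
        have z2 : g' 2 = 0 := by simpa using hz 2
        apply hi'
        fin_cases i'
        · exact z0
        · exact z1
        · exact z2
        · exact h3
      obtain ⟨d₀, d₁, d₂, hw5⟩ :
          ∃ d₀ d₁ d₂ : K, vv β i₅ = d₀ • vv β i₁ + d₁ • vv β i₂ + d₂ • vv β i₃ := by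
        refine ⟨-(g' 0)/g' 3, -(g' 1)/g' 3, -(g' 2)/g' 3, ?_⟩
        funext r
        have hr := congrFun hv' r
        simp only [Pi.add_apply, Pi.smul_apply, Pi.zero_apply, smul_eq_mul] at hr ⊢
        rw [div_mul_eq_mul_div, div_mul_eq_mul_div, div_mul_eq_mul_div, ← add_div,
          ← add_div, eq_div_iff hg'3]
        linear_combination hr
      intro j hj
      simp only [hT, Finset.mem_insert, Finset.mem_singleton] at hj
      rcases hj with h | h | h | h | h
      · rw [h, H1, show (![vv β i₂, vv β i₃, vv β i₄, vv β i₅]) =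
          ![(0:K) • vv β i₁ + (1:K) • vv β i₂ + (0:K) • vv β i₃,
            (0:K) • vv β i₁ + (0:K) • vv β i₂ + (1:K) • vv β i₃,
            c₀ • vv β i₁ + c₁ • vv β i₂ + c₂ • vv β i₃,
            d₀ • vv β i₁ + d₁ • vv β i₂ + d₂ • vv β i₃] from by
            funext k; fin_cases k
            · simp
            · simp
            · exact hw3
            · exact hw5]
        exact det_span3 _ _ _ _ _ _ _ _ _ _ _ _ _ _ _
      · rw [h, H2, show (![vv β i₁, vv β i₃, vv β i₄, vv β i₅]) =
          ![(1:K) • vv β i₁ + (0:K) • vv β i₂ + (0:K) • vv β i₃,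
            (0:K) • vv β i₁ + (0:K) • vv β i₂ + (1:K) • vv β i₃,
            c₀ • vv β i₁ + c₁ • vv β i₂ + c₂ • vv β i₃,
            d₀ • vv β i₁ + d₁ • vv β i₂ + d₂ • vv β i₃] from by
            funext k; fin_cases k
            · simp
            · simp
            · exact hw3
            · exact hw5]
        exact det_span3 _ _ _ _ _ _ _ _ _ _ _ _ _ _ _
      · rw [h, H3, show (![vv β i₁, vv β i₂, vv β i₄, vv β i₅]) =
          ![(1:K) • vv β i₁ + (0:K) • vv β i₂ + (0:K) • vv β i₃,
            (0:K) • vv β i₁ + (1:K) • vv β i₂ + (0:K) • vv β i₃,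
            c₀ • vv β i₁ + c₁ • vv β i₂ + c₂ • vv β i₃,
            d₀ • vv β i₁ + d₁ • vv β i₂ + d₂ • vv β i₃] from by
            funext k; fin_cases k
            · simp
            · simp
            · exact hw3
            · exact hw5]
        exact det_span3 _ _ _ _ _ _ _ _ _ _ _ _ _ _ _
      · rw [h, H4]; exact h5d
      · rw [h]; exact h₅
    · -- v i₅ outside the span : the four determinants containing i₅ do not vanish
      right
      have LI0125 : LinearIndependent K ![vv β i₁, vv β i₂, vv β i₃, vv β i₅] :=
        (det_ne_zero_iff_li ![vv β i₁, vv β i₂, vv β i₃, vv β i₅]).1 h5d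
      intro j hj
      simp only [Finset.mem_insert, Finset.mem_singleton] at hj
      rcases hj with h | h | h | h
      · rw [h, Ne, H1]
        intro hd
        have hnli' : ¬ LinearIndependent K ![vv β i₂, vv β i₃, vv β i₄, vv β i₅] :=
          fun hli => (det_ne_zero_iff_li ![vv β i₂, vv β i₃, vv β i₄, vv β i₅]).2 hli hd
        obtain ⟨g', hsum', i', hi'⟩ := Fintype.not_linearIndependent_iff.1 hnli'
        have hv' : g' 0 • vv β i₂ + g' 1 • vv β i₃ + g' 2 • vv β i₄ + g' 3 • vv β i₅ = 0 := by
          simpa [Fin.sum_univ_four] using hsum'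
        have hz := Fintype.linearIndependent_iff.1 LI0125
          ![g' 2 * c₀, g' 0 + g' 2 * c₁, g' 1 + g' 2 * c₂, g' 3] (by
          funext r
          have hvr := congrFun hv' r
          have h3r := congrFun hw3 r
          simp only [Pi.add_apply, Pi.smul_apply, Pi.zero_apply, smul_eq_mul] at hvr h3r
          simp [Fin.sum_univ_four]
          linear_combination hvr - g' 2 * h3r)
        have hg'2 : g' 2 = 0 := by
          have h0 : g' 2 = 0 ∨ c₀ = 0 := by simpa using hz 0
          rcases h0 with h0 | h0
          · exact h0
          · exact absurd h0 hc0
        have hg'3 : g' 3 = 0 := by simpa using hz 3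
        have hg'0 : g' 0 = 0 := by simpa [hg'2] using hz 1
        have hg'1 : g' 1 = 0 := by simpa [hg'2] using hz 2
        apply hi'
        fin_cases i'
        · exact hg'0
        · exact hg'1
        · exact hg'2
        · exact hg'3
      · rw [h, Ne, H2]
        intro hd
        have hnli' : ¬ LinearIndependent K ![vv β i₁, vv β i₃, vv β i₄, vv β i₅] :=
          fun hli => (det_ne_zero_iff_li ![vv β i₁, vv β i₃, vv β i₄, vv β i₅]).2 hli hd
        obtain ⟨g', hsum', i', hi'⟩ := Fintype.not_linearIndependent_iff.1 hnli'
        have hv' : g' 0 • vv β i₁ + g' 1 • vv β i₃ + g' 2 • vv β i₄ + g' 3 • vv β i₅ = 0 := by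
          simpa [Fin.sum_univ_four] using hsum'
        have hz := Fintype.linearIndependent_iff.1 LI0125
          ![g' 0 + g' 2 * c₀, g' 2 * c₁, g' 1 + g' 2 * c₂, g' 3] (by
          funext r
          have hvr := congrFun hv' r
          have h3r := congrFun hw3 r
          simp only [Pi.add_apply, Pi.smul_apply, Pi.zero_apply, smul_eq_mul] at hvr h3r
          simp [Fin.sum_univ_four]
          linear_combination hvr - g' 2 * h3r)
        have hg'2 : g' 2 = 0 := by
          have h0 : g' 2 = 0 ∨ c₁ = 0 := by simpa using hz 1
          rcases h0 with h0 | h0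
          · exact h0
          · exact absurd h0 hc1
        have hg'3 : g' 3 = 0 := by simpa using hz 3
        have hg'0 : g' 0 = 0 := by simpa [hg'2] using hz 0
        have hg'1 : g' 1 = 0 := by simpa [hg'2] using hz 2
        apply hi'
        fin_cases i'
        · exact hg'0
        · exact hg'1
        · exact hg'2
        · exact hg'3
      · rw [h, Ne, H3]
        intro hd
        have hnli' : ¬ LinearIndependent K ![vv β i₁, vv β i₂, vv β i₄, vv β i₅] :=
          fun hli => (det_ne_zero_iff_li ![vv β i₁, vv β i₂, vv β i₄, vv β i₅]).2 hli hd
        obtain ⟨g', hsum', i', hi'⟩ := Fintype.not_linearIndependent_iff.1 hnli'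
        have hv' : g' 0 • vv β i₁ + g' 1 • vv β i₂ + g' 2 • vv β i₄ + g' 3 • vv β i₅ = 0 := by
          simpa [Fin.sum_univ_four] using hsum'
        have hz := Fintype.linearIndependent_iff.1 LI0125
          ![g' 0 + g' 2 * c₀, g' 1 + g' 2 * c₁, g' 2 * c₂, g' 3] (by
          funext r
          have hvr := congrFun hv' r
          have h3r := congrFun hw3 r
          simp only [Pi.add_apply, Pi.smul_apply, Pi.zero_apply, smul_eq_mul] at hvr h3r
          simp [Fin.sum_univ_four]
          linear_combination hvr - g' 2 * h3r)
        have hg'2 : g' 2 = 0 := by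
          have h0 : g' 2 = 0 ∨ c₂ = 0 := by simpa using hz 2
          rcases h0 with h0 | h0
          · exact h0
          · exact absurd h0 hc2
        have hg'3 : g' 3 = 0 := by simpa using hz 3
        have hg'0 : g' 0 = 0 := by simpa [hg'2] using hz 0
        have hg'1 : g' 1 = 0 := by simpa [hg'2] using hz 1
        apply hi'
        fin_cases i'
        · exact hg'0
        · exact hg'1
        · exact hg'2
        · exact hg'3
      · rw [h, Ne, H4]
        exact h5d
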